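/- If Kripke model M and action model U are both synchronous and U is history preserving, then every world (v,t) of M[U] satisfies depth(v,t) = depth(v) + depth(t), and M[U] is synchronous: M[U] is depth-defined and (w,s) →_a (w',s') implies depth(w,s) = depth(w',s'). -/

import Mathlib

structure KModel (Agt Prp W : Type) where
  rel : Agt → W → W → Prop
  yest : W → W → Prop
  val : Prp → W → Prop

structure AModel (Agt W E : Type) where
  rel : Agt → E → E → Prop
  yest : E → E → Prop
  pre : E → W → Prop

def hasChain {α : Type} (y : α → α → Prop) : ℕ → α → Prop
  | 0, _ => True
  | n + 1, w => ∃ v, y v w ∧ hasChain y n v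

noncomputable def depth {α : Type} (y : α → α → Prop) (w : α) : ℕ∞ :=
  sSup ((fun n : ℕ => (n : ℕ∞)) '' {n | hasChain y n w})

def DepthDef {α : Type} (y : α → α → Prop) : Prop := ∀ x, depth y x ≠ ⊤

def pastState {α : Type} (y : α → α → Prop) (s : α) : Prop := ¬ ∃ s', y s' s

def KnowPast {Agt α : Type} (r : Agt → α → α → Prop) (y : α → α → Prop) : Prop :=
  ∀ a w' w v, y w' w → r a w v → ∃ v', y v' v

def KnowInit {Agt α : Type} (r : Agt → α → α → Prop) (y : α → α → Prop) : Prop :=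
  ∀ a w v, r a w v → pastState y w → pastState y v

def UniqPast {α : Type} (y : α → α → Prop) : Prop :=
  ∀ w' w'' w, y w' w → y w'' w → w' = w''

def PerfRecall {Agt α : Type} (r : Agt → α → α → Prop) (y : α → α → Prop) : Prop :=
  ∀ a w' w v, y w' w → r a w v → ∃ v', r a w' v' ∧ y v' v

def Sync {Agt α : Type} (r : Agt → α → α → Prop) (y : α → α → Prop) : Prop :=
  DepthDef y ∧ ∀ a x x', r a x x' → depth y x = depth y x'

def EpiPast {Agt W E : Type} (U : AModel Agt W E) (s : E) : Prop :=
  pastState U.yest s ∧ (∀ w, U.pre s w) ∧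
    ∀ a t, (U.rel a s t ↔ t = s) ∧ (U.rel a t s ↔ t = s)

def HistPres {Agt W E : Type} (U : AModel Agt W E) : Prop :=
  (∀ s' s, U.yest s' s → ∀ w, U.pre s w → U.pre s' w) ∧
    ∀ s, pastState U.yest s → EpiPast U s

def pRel {Agt Prp W E : Type} (M : KModel Agt Prp W) (U : AModel Agt W E)
    (a : Agt) (p q : W × E) : Prop :=
  U.pre p.2 p.1 ∧ U.pre q.2 q.1 ∧ M.rel a p.1 q.1 ∧ U.rel a p.2 q.2

def pYest {Agt Prp W E : Type} (M : KModel Agt Prp W) (U : AModel Agt W E)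
    (p q : W × E) : Prop :=
  U.pre p.2 p.1 ∧ U.pre q.2 q.1 ∧
    ((M.yest p.1 q.1 ∧ p.2 = q.2 ∧ pastState U.yest q.2) ∨ (p.1 = q.1 ∧ U.yest p.2 q.2))

def prodM {Agt Prp W E : Type} (M : KModel Agt Prp W) (U : AModel Agt W E) :
    KModel Agt Prp (W × E) :=
  ⟨pRel M U, pYest M U, fun p q => M.val p q.1⟩

inductive Fm (Agt Prp : Type) : Type
  | bot : Fm Agt Prp
  | atom : Prp → Fm Agt Prp
  | neg : Fm Agt Prp → Fm Agt Prp
  | conj : Fm Agt Prp → Fm Agt Prp → Fm Agt Prp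
  | box : Agt → Fm Agt Prp → Fm Agt Prp
  | yest : Fm Agt Prp → Fm Agt Prp

def sat {Agt Prp W : Type} (M : KModel Agt Prp W) (w : W) : Fm Agt Prp → Prop
  | .bot => False
  | .atom p => M.val p w
  | .neg φ => ¬ sat M w φ
  | .conj φ ψ => sat M w φ ∧ sat M w ψ
  | .box a φ => ∀ v, M.rel a w v → sat M v φ
  | .yest φ => ∀ v, M.yest v w → sat M v φ

def Fm.diaY {Agt Prp : Type} (φ : Fm Agt Prp) : Fm Agt Prp := .neg (.yest (.neg φ))

def IsBisim {Agt Prp W W' : Type} (M : KModel Agt Prp W) (M' : KModel Agt Prp W')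
    (B : W → W' → Prop) : Prop :=
  (∃ w w', B w w') ∧
  ∀ w w', B w w' →
    (∀ p, M.val p w ↔ M'.val p w') ∧
    (∀ a v, M.rel a w v → ∃ v', M'.rel a w' v' ∧ B v v') ∧
    (∀ a v', M'.rel a w' v' → ∃ v, M.rel a w v ∧ B v v') ∧
    (∀ v, M.yest v w → ∃ v', M'.yest v' w' ∧ B v v') ∧
    (∀ v', M'.yest v' w' → ∃ v, M.yest v w ∧ B v v')
section Aux
variable {α : Type}

lemma chain_le_depth (y : α → α → Prop) {n : ℕ} {w : α} (h : hasChain y n w) :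
    (n : ℕ∞) ≤ depth y w :=
  le_sSup ⟨n, h, rfl⟩

lemma depth_le_of (y : α → α → Prop) {w : α} {c : ℕ∞}
    (h : ∀ n, hasChain y n w → (n : ℕ∞) ≤ c) : depth y w ≤ c := by
  apply sSup_le
  rintro x ⟨n, hn, rfl⟩
  exact h n hn

open scoped Classical in
lemma depth_attained (y : α → α → Prop) {w : α} (h : depth y w ≠ ⊤) :
    ∃ n : ℕ, depth y w = (n : ℕ∞) ∧ hasChain y n w := by
  obtain ⟨m, hm⟩ : ∃ m : ℕ, depth y w = (m : ℕ∞) := by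
    cases hd : depth y w with
    | top => exact absurd hd h
    | coe m => exact ⟨m, rfl⟩
  set n₀ := Nat.findGreatest (fun n => hasChain y n w) m with hn₀
  have hchain : hasChain y n₀ w := by
    have := Nat.findGreatest_spec (P := fun n => hasChain y n w) (Nat.zero_le m)
      (trivial : hasChain y 0 w)
    exact this
  refine ⟨n₀, le_antisymm ?_ (chain_le_depth y hchain), hchain⟩
  apply depth_le_of
  intro n hn
  have hnm : (n : ℕ∞) ≤ (m : ℕ∞) := hm ▸ chain_le_depth y hn
  exact_mod_cast Nat.le_findGreatest (by exact_mod_cast hnm) hn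

lemma depth_past {y : α → α → Prop} {t : α} (h : pastState y t) : depth y t = 0 := by
  apply le_antisymm _ zero_le
  apply depth_le_of
  intro n hn
  cases n with
  | zero => simp
  | succ k => obtain ⟨v, hv, -⟩ := hn; exact absurd ⟨v, hv⟩ h

lemma past_of_depth_zero {y : α → α → Prop} {t : α} (h : depth y t = 0) : pastState y t := by
  rintro ⟨s, hs⟩
  have : (1 : ℕ∞) ≤ depth y t := chain_le_depth y (n := 1) ⟨s, hs, trivial⟩
  simp [h] at this

lemma depth_succ_le {y : α → α → Prop} {t' t : α} (hfin : depth y t' ≠ ⊤)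
    (hy : y t' t) : depth y t' + 1 ≤ depth y t := by
  obtain ⟨n, hn, hc⟩ := depth_attained y hfin
  have : ((n + 1 : ℕ) : ℕ∞) ≤ depth y t := chain_le_depth y ⟨t', hy, hc⟩
  rw [hn]
  exact_mod_cast this

end Aux

section Main
variable {Agt Prp W E : Type} (M : KModel Agt Prp W) (U : AModel Agt W E)

lemma upper_bound (hMd : DepthDef M.yest) (hUd : DepthDef U.yest) :
    ∀ (n : ℕ) (p : W × E), hasChain (pYest M U) n p →
      (n : ℕ∞) ≤ depth M.yest p.1 + depth U.yest p.2 := by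
  intro n
  induction n with
  | zero => simp
  | succ m ih =>
    rintro ⟨v, t⟩ ⟨⟨v', t'⟩, ⟨-, -, hcase⟩, hc⟩
    have hm := ih _ hc
    push_cast
    rcases hcase with ⟨hMy, h2, hps⟩ | ⟨h1, hUy⟩
    · simp only at h2 hMy hps
      subst h2
      rw [depth_past hps]
      rw [depth_past hps] at hm
      simp only [add_zero] at hm ⊢
      calc (m : ℕ∞) + 1 ≤ depth M.yest v' + 1 := by
            exact add_le_add_left hm 1
        _ ≤ depth M.yest v := depth_succ_le (hMd v') hMy
    · simp only at h1 hUy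
      subst h1
      calc (m : ℕ∞) + 1 ≤ (depth M.yest v' + depth U.yest t') + 1 :=
            add_le_add_left hm 1
        _ = depth M.yest v' + (depth U.yest t' + 1) := by rw [add_assoc]
        _ ≤ depth M.yest v' + depth U.yest t :=
            add_le_add_right (depth_succ_le (hUd t') hUy) _

lemma lower_bound_M (hH : HistPres U) {t : E} (hps : pastState U.yest t) :
    ∀ (j : ℕ) (v : W), hasChain M.yest j v → hasChain (pYest M U) j (v, t) := by
  have hpre : ∀ w, U.pre t w := ((hH.2 t hps).2.1)
  intro j
  induction j with
  | zero => intro v _; trivial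
  | succ m ih =>
    rintro v ⟨v', hy, hc⟩
    exact ⟨(v', t), ⟨hpre v', hpre v, Or.inl ⟨hy, rfl, hps⟩⟩, ih v' hc⟩

lemma lower_bound (hUd : DepthDef U.yest) (hH : HistPres U) :
    ∀ (k : ℕ) (t : E) (v : W) (j : ℕ), U.pre t v → hasChain U.yest k t →
      (k : ℕ∞) = depth U.yest t → hasChain M.yest j v →
      hasChain (pYest M U) (j + k) (v, t) := by
  intro k
  induction k with
  | zero =>
    intro t v j hpre _ hdep hj
    have hps : pastState U.yest t := past_of_depth_zero (by exact hdep.symm ▸ rfl)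
    exact lower_bound_M M U hH hps j v hj
  | succ m ih =>
    rintro t v j hpre ⟨t', hy, hc⟩ hdep hj
    have hpre' : U.pre t' v := hH.1 t' t hy v hpre
    have hdep' : (m : ℕ∞) = depth U.yest t' := by
      refine le_antisymm (chain_le_depth _ hc) ?_
      have h1 : depth U.yest t' + 1 ≤ depth U.yest t := depth_succ_le (hUd t') hy
      obtain ⟨n, hn, -⟩ := depth_attained U.yest (hUd t')
      rw [← hdep, hn] at h1
      rw [hn]
      have : n + 1 ≤ m + 1 := by exact_mod_cast h1
      exact_mod_cast Nat.le_of_succ_le_succ this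
    have := ih t' v j hpre' hc hdep' hj
    exact ⟨(v, t'), ⟨hpre', hpre, Or.inr ⟨rfl, hy⟩⟩, this⟩

end Main

theorem stmt11 {Agt Prp W E : Type} (M : KModel Agt Prp W) (U : AModel Agt W E)
    (hM : Sync M.rel M.yest) (hU : Sync U.rel U.yest) (hH : HistPres U) :
    (∀ p : W × E, U.pre p.2 p.1 →
        depth (pYest M U) p = depth M.yest p.1 + depth U.yest p.2) ∧
      (∀ p : W × E, U.pre p.2 p.1 → depth (pYest M U) p ≠ ⊤) ∧
      (∀ (a : Agt) (p q : W × E), pRel M U a p q →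
        depth (pYest M U) p = depth (pYest M U) q) := by
  have hMd := hM.1
  have hUd := hU.1
  have key : ∀ p : W × E, U.pre p.2 p.1 →
      depth (pYest M U) p = depth M.yest p.1 + depth U.yest p.2 := by
    rintro ⟨v, t⟩ hpre
    refine le_antisymm (depth_le_of _ fun n hn => upper_bound M U hMd hUd n _ hn) ?_
    obtain ⟨j, hj, hjc⟩ := depth_attained M.yest (hMd v)
    obtain ⟨k, hk, hkc⟩ := depth_attained U.yest (hUd t)
    have hch := lower_bound M U hUd hH k t v j hpre hkc hk.symm hjc
    have := chain_le_depth (pYest M U) hch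
    simp only [hj, hk]
    exact_mod_cast this
  refine ⟨key, ?_, ?_⟩
  · rintro ⟨v, t⟩ hpre
    rw [key _ hpre]
    obtain ⟨j, hj, -⟩ := depth_attained M.yest (hMd v)
    obtain ⟨k, hk, -⟩ := depth_attained U.yest (hUd t)
    rw [hj, hk]
    exact_mod_cast ENat.coe_ne_top (j + k)
  · rintro a ⟨v, t⟩ ⟨v', t'⟩ ⟨hp, hq, hr, hur⟩
    rw [key _ hp, key _ hq, hM.2 a v v' hr, hU.2 a t t' hur]
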